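/- Let 𝕂 be ℝ or ℂ and let r = (r_1,…,r_n) be a vector of positive reals. A matrix F ∈ 𝕂^{d×n} is a critical point of the total frame energy Φ_r (i.e. ∇Φ_r(F) = 0) if and only if each column f_i satisfies the eigenvector equation 4 F F* f_i = (4 + 1/r_i − ‖f_i‖²/r_i²) f_i for every i = 1,…,n. -/

import Mathlib

open scoped BigOperators Matrix

attribute [local instance] Matrix.normedAddCommGroup Matrix.normedSpace

/-- The total frame energy. -/
noncomputable def totalFrameEnergy {d n : ℕ} {𝕂 : Type*} [RCLike 𝕂]
    (r : Fin n → ℝ) (F : Matrix (Fin d) (Fin n) 𝕂) : ℝ :=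
  (∑ i, ∑ j, ‖(F * Fᴴ - 1 : Matrix (Fin d) (Fin d) 𝕂) i j‖ ^ 2) +
    (1 / 4) * ∑ i, ((∑ j, ‖F j i‖ ^ 2) / r i - 1) ^ 2

/-- The real Frobenius inner product `⟨X, Y⟩ = Re tr (Xᴴ Y)`, written entrywise. -/
noncomputable def frobInner {d n : ℕ} {𝕂 : Type*} [RCLike 𝕂]
    (X Y : Matrix (Fin d) (Fin n) 𝕂) : ℝ :=
  ∑ i, ∑ j, RCLike.re ((starRingEnd 𝕂) (X i j) * Y i j)

/-- `G` is the gradient of `Φ` at `F` w.r.t. the real Frobenius inner product. -/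
noncomputable def IsFrobGradientAt {d n : ℕ} {𝕂 : Type*} [RCLike 𝕂]
    (Φ : Matrix (Fin d) (Fin n) 𝕂 → ℝ) (G F : Matrix (Fin d) (Fin n) 𝕂) : Prop :=
  DifferentiableAt ℝ Φ F ∧ ∀ X, fderiv ℝ Φ F X = frobInner G X

open RCLike Finset

section Aux

variable {d n : ℕ} {𝕂 : Type*} [RCLike 𝕂]

noncomputable def entCLM (i : Fin d) (j : Fin n) : Matrix (Fin d) (Fin n) 𝕂 →L[ℝ] 𝕂 :=
  LinearMap.toContinuousLinearMap
    { toFun := fun F => F i j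
      map_add' := fun _ _ => rfl
      map_smul' := fun _ _ => rfl }

@[simp] lemma entCLM_apply (i : Fin d) (j : Fin n) (F : Matrix (Fin d) (Fin n) 𝕂) :
    entCLM i j F = F i j := rfl

lemma hasFDerivAt_ent (i : Fin d) (j : Fin n) (F : Matrix (Fin d) (Fin n) 𝕂) :
    HasFDerivAt (fun F : Matrix (Fin d) (Fin n) 𝕂 => F i j) (entCLM i j) F := by
  have h := (entCLM i j).hasFDerivAt (x := F)
  have : ⇑(entCLM (𝕂 := 𝕂) i j) = fun F : Matrix (Fin d) (Fin n) 𝕂 => F i j := rfl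
  rwa [this] at h

lemma hasFDerivAt_conj_ent (i : Fin d) (j : Fin n) (F : Matrix (Fin d) (Fin n) 𝕂) :
    HasFDerivAt (fun F : Matrix (Fin d) (Fin n) 𝕂 => (starRingEnd 𝕂) (F i j))
      (((RCLike.conjCLE (K := 𝕂)) : 𝕂 →L[ℝ] 𝕂).comp (entCLM i j)) F := by
  have h := (((RCLike.conjCLE (K := 𝕂)) : 𝕂 →L[ℝ] 𝕂).hasFDerivAt (x := F i j)).comp F
    (hasFDerivAt_ent i j F)
  exact h

noncomputable def nsqD (z : 𝕂) : 𝕂 →L[ℝ] ℝ :=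
  (2 * re z) • (reCLM : 𝕂 →L[ℝ] ℝ) + (2 * im z) • (imCLM : 𝕂 →L[ℝ] ℝ)

lemma re_conj_mul' (z w : 𝕂) : re ((starRingEnd 𝕂) z * w) = re z * re w + im z * im w := by
  simp [RCLike.mul_re]

@[simp] lemma nsqD_apply (z w : 𝕂) : nsqD z w = 2 * re ((starRingEnd 𝕂) z * w) := by
  simp [nsqD, re_conj_mul']; ring

lemma hasFDerivAt_nsq (z : 𝕂) :
    HasFDerivAt (fun w : 𝕂 => ‖w‖ ^ 2) (nsqD z) z := by
  have hfun : (fun w : 𝕂 => ‖w‖ ^ 2) = fun w => re w * re w + im w * im w := by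
    funext w
    rw [← RCLike.normSq_eq_def', RCLike.normSq_apply]
  rw [hfun]
  have h1 : HasFDerivAt (fun w : 𝕂 => re w) (reCLM : 𝕂 →L[ℝ] ℝ) z :=
    (reCLM : 𝕂 →L[ℝ] ℝ).hasFDerivAt
  have h2 : HasFDerivAt (fun w : 𝕂 => im w) (imCLM : 𝕂 →L[ℝ] ℝ) z :=
    (imCLM : 𝕂 →L[ℝ] ℝ).hasFDerivAt
  have := (h1.mul h1).add (h2.mul h2)
  refine this.congr_fderiv ?_
  ext w
  simp [nsqD]
  ring

/-- the gradient matrix of the total frame energy -/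
noncomputable def gradMat (r : Fin n → ℝ) (F : Matrix (Fin d) (Fin n) 𝕂) :
    Matrix (Fin d) (Fin n) 𝕂 :=
  Matrix.of fun a b => ((4 : ℝ) : 𝕂) * (((F * Fᴴ - 1) * F : Matrix (Fin d) (Fin n) 𝕂) a b) +
    ((((∑ j, ‖F j b‖ ^ 2) / r b - 1) / r b : ℝ) : 𝕂) * F a b

lemma frobInner_trace (A B : Matrix (Fin d) (Fin n) 𝕂) :
    frobInner A B = re ((Aᴴ * B).trace) := by
  simp only [frobInner, Matrix.trace, Matrix.diag, Matrix.mul_apply,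
    Matrix.conjTranspose_apply, RCLike.star_def, map_sum]
  exact Finset.sum_comm

lemma sum_two_re (A B : Matrix (Fin d) (Fin n) 𝕂) :
    (∑ i, ∑ j, 2 * re ((starRingEnd 𝕂) (A i j) * B i j)) = 2 * re ((Aᴴ * B).trace) := by
  rw [← frobInner_trace, frobInner, Finset.mul_sum]
  exact Finset.sum_congr rfl fun i _ => by rw [Finset.mul_sum]

lemma hermit_key (M : Matrix (Fin d) (Fin d) 𝕂) (hM : M.IsHermitian)
    (F X : Matrix (Fin d) (Fin n) 𝕂) :
    re ((Mᴴ * (F * Xᴴ + X * Fᴴ)).trace) = 2 * re (((M * F)ᴴ * X).trace) := by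
  rw [hM.eq, Matrix.mul_add, Matrix.trace_add, map_add]
  have hMF : ((M * F)ᴴ : Matrix (Fin n) (Fin d) 𝕂) = Fᴴ * M := by
    rw [Matrix.conjTranspose_mul, hM.eq]
  have h1 : (M * (X * Fᴴ)).trace = (((M * F)ᴴ : Matrix (Fin n) (Fin d) 𝕂) * X).trace := by
    rw [hMF, Matrix.trace_mul_comm M (X * Fᴴ), Matrix.mul_assoc, Matrix.trace_mul_comm]
  have h2 : re ((M * (F * Xᴴ)).trace) = re ((((M * F)ᴴ : Matrix (Fin n) (Fin d) 𝕂) * X).trace) := by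
    have e1 : ((M * (F * Xᴴ))ᴴ).trace = star ((M * (F * Xᴴ)).trace) :=
      Matrix.trace_conjTranspose _
    have e2 : ((M * (F * Xᴴ))ᴴ : Matrix (Fin d) (Fin d) 𝕂)
        = X * ((M * F)ᴴ : Matrix (Fin n) (Fin d) 𝕂) := by
      rw [Matrix.conjTranspose_mul, Matrix.conjTranspose_mul,
        Matrix.conjTranspose_conjTranspose, hM.eq, hMF, Matrix.mul_assoc]
    have : re (star ((M * (F * Xᴴ)).trace)) = re ((M * (F * Xᴴ)).trace) := by
      simp [RCLike.star_def]
    rw [← this, ← e1, e2, Matrix.trace_mul_comm]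
  rw [h1, h2]; ring

lemma tfe_fderiv (r : Fin n → ℝ) (F : Matrix (Fin d) (Fin n) 𝕂) :
    DifferentiableAt ℝ (totalFrameEnergy r) F ∧
    ∀ X, fderiv ℝ (totalFrameEnergy r) F X = frobInner (gradMat r F) X := by
  have hM : ∀ i j : Fin d, HasFDerivAt
      (fun G : Matrix (Fin d) (Fin n) 𝕂 => (G * Gᴴ - 1 : Matrix (Fin d) (Fin d) 𝕂) i j)
      (∑ k, (F i k • (((RCLike.conjCLE (K := 𝕂)) : 𝕂 →L[ℝ] 𝕂).comp (entCLM j k))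
        + (starRingEnd 𝕂) (F j k) • entCLM i k)) F := by
    intro i j
    have hrw : (fun G : Matrix (Fin d) (Fin n) 𝕂 => (G * Gᴴ - 1 : Matrix (Fin d) (Fin d) 𝕂) i j)
        = fun G => (∑ k, G i k * (starRingEnd 𝕂) (G j k)) - (1 : Matrix (Fin d) (Fin d) 𝕂) i j := by
      funext G
      simp [Matrix.sub_apply, Matrix.mul_apply, Matrix.conjTranspose_apply, RCLike.star_def]
    rw [hrw]
    exact (HasFDerivAt.fun_sum fun k _ =>
      (hasFDerivAt_ent i k F).mul (hasFDerivAt_conj_ent j k F)).sub_const _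
  have hT1 : HasFDerivAt
      (fun G : Matrix (Fin d) (Fin n) 𝕂 =>
        ∑ i, ∑ j, ‖(G * Gᴴ - 1 : Matrix (Fin d) (Fin d) 𝕂) i j‖ ^ 2)
      (∑ i, ∑ j, (nsqD ((F * Fᴴ - 1 : Matrix (Fin d) (Fin d) 𝕂) i j)).comp
        (∑ k, (F i k • (((RCLike.conjCLE (K := 𝕂)) : 𝕂 →L[ℝ] 𝕂).comp (entCLM j k))
          + (starRingEnd 𝕂) (F j k) • entCLM i k))) F := by
    refine HasFDerivAt.fun_sum fun i _ => HasFDerivAt.fun_sum fun j _ => ?_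
    exact (hasFDerivAt_nsq _).comp F (hM i j)
  have hs : ∀ b, HasFDerivAt (fun G : Matrix (Fin d) (Fin n) 𝕂 => ∑ j, ‖G j b‖ ^ 2)
      (∑ j, (nsqD (F j b)).comp (entCLM j b)) F :=
    fun b => HasFDerivAt.fun_sum fun j _ => by
      have := (hasFDerivAt_nsq (F j b)).comp F (hasFDerivAt_ent j b F); exact this
  have hu : ∀ b, HasFDerivAt
      (fun G : Matrix (Fin d) (Fin n) 𝕂 => (∑ j, ‖G j b‖ ^ 2) / r b - 1)
      ((r b)⁻¹ • (∑ j, (nsqD (F j b)).comp (entCLM j b))) F := by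
    intro b
    simp only [div_eq_mul_inv]
    have := ((hs b).mul_const ((r b)⁻¹)).sub_const (1 : ℝ)
    exact this
  have hsq : ∀ b, HasFDerivAt
      (fun G : Matrix (Fin d) (Fin n) 𝕂 => ((∑ j, ‖G j b‖ ^ 2) / r b - 1) ^ 2)
      (((∑ j, ‖F j b‖ ^ 2) / r b - 1) • ((r b)⁻¹ • (∑ j, (nsqD (F j b)).comp (entCLM j b)))
       + ((∑ j, ‖F j b‖ ^ 2) / r b - 1) • ((r b)⁻¹ • (∑ j, (nsqD (F j b)).comp (entCLM j b)))) F := by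
    intro b
    have h := (hu b).mul (hu b)
    have hfun : (fun G : Matrix (Fin d) (Fin n) 𝕂 => ((∑ j, ‖G j b‖ ^ 2) / r b - 1) ^ 2)
        = fun G => ((∑ j, ‖G j b‖ ^ 2) / r b - 1) * ((∑ j, ‖G j b‖ ^ 2) / r b - 1) := by
      funext G; ring
    rw [hfun]
    exact h
  have hT2 : HasFDerivAt
      (fun G : Matrix (Fin d) (Fin n) 𝕂 => (1/4 : ℝ) * ∑ b, ((∑ j, ‖G j b‖ ^ 2) / r b - 1) ^ 2)
      ((1/4 : ℝ) • ∑ b, (((∑ j, ‖F j b‖ ^ 2) / r b - 1) • ((r b)⁻¹ • (∑ j, (nsqD (F j b)).comp (entCLM j b)))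
        + ((∑ j, ‖F j b‖ ^ 2) / r b - 1) • ((r b)⁻¹ • (∑ j, (nsqD (F j b)).comp (entCLM j b))))) F := by
    have := (HasFDerivAt.fun_sum (u := Finset.univ) fun b _ => hsq b).const_mul (1/4 : ℝ)
    exact this
  have hΦ : HasFDerivAt (totalFrameEnergy r)
      ((_ : Matrix (Fin d) (Fin n) 𝕂 →L[ℝ] ℝ) + (_ : Matrix (Fin d) (Fin n) 𝕂 →L[ℝ] ℝ)) F := hT1.add hT2
  refine ⟨hΦ.differentiableAt, fun X => ?_⟩
  refine (DFunLike.congr_fun hΦ.fderiv X).trans ?_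
  simp only [ContinuousLinearMap.add_apply, ContinuousLinearMap.coe_sum', Finset.sum_apply,
    ContinuousLinearMap.smul_apply, ContinuousLinearMap.comp_apply, ContinuousLinearEquiv.coe_coe,
    RCLike.conjCLE_apply, entCLM_apply, nsqD_apply, smul_eq_mul]
  -- rewrite the inner directional sums as matrix entries
  have hin : ∀ i j : Fin d,
      (∑ k, (F i k * (starRingEnd 𝕂) (X j k) + (starRingEnd 𝕂) (F j k) * X i k))
        = (F * Xᴴ + X * Fᴴ) i j := by
    intro i j
    simp [Matrix.add_apply, Matrix.mul_apply, Matrix.conjTranspose_apply, RCLike.star_def,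
      Finset.sum_add_distrib, mul_comm]
  have hA : (∑ i, ∑ j, 2 * re ((starRingEnd 𝕂) ((F * Fᴴ - 1 : Matrix (Fin d) (Fin d) 𝕂) i j)
        * (∑ k, (F i k * (starRingEnd 𝕂) (X j k) + (starRingEnd 𝕂) (F j k) * X i k))))
      = 4 * re (((((F * Fᴴ - 1 : Matrix (Fin d) (Fin d) 𝕂) * F : Matrix (Fin d) (Fin n) 𝕂))ᴴ * X).trace) := by
    have : ∀ i j : Fin d, 2 * re ((starRingEnd 𝕂) ((F * Fᴴ - 1 : Matrix (Fin d) (Fin d) 𝕂) i j)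
        * (∑ k, (F i k * (starRingEnd 𝕂) (X j k) + (starRingEnd 𝕂) (F j k) * X i k)))
        = 2 * re ((starRingEnd 𝕂) ((F * Fᴴ - 1 : Matrix (Fin d) (Fin d) 𝕂) i j)
          * (F * Xᴴ + X * Fᴴ) i j) := by
      intro i j; rw [hin i j]
    rw [Finset.sum_congr rfl fun i _ => Finset.sum_congr rfl fun j _ => this i j]
    rw [sum_two_re]
    have hHerm : (F * Fᴴ - 1 : Matrix (Fin d) (Fin d) 𝕂).IsHermitian :=
      (Matrix.isHermitian_mul_conjTranspose_self F).sub Matrix.isHermitian_one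
    rw [hermit_key _ hHerm]
    ring
  rw [hA]
  have hentry : ∀ (a : Fin d) (b : Fin n), re ((starRingEnd 𝕂) (gradMat r F a b) * X a b)
      = 4 * re ((starRingEnd 𝕂) ((((F * Fᴴ - 1) * F : Matrix (Fin d) (Fin n) 𝕂)) a b) * X a b)
        + ((∑ j, ‖F j b‖ ^ 2) / r b - 1) / r b * re ((starRingEnd 𝕂) (F a b) * X a b) := by
    intro a b
    simp only [gradMat, Matrix.of_apply, map_add, map_mul, RCLike.conj_ofReal, add_mul,
      mul_assoc, RCLike.re_ofReal_mul]
  have hR : frobInner (gradMat r F) X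
      = 4 * re (((((F * Fᴴ - 1 : Matrix (Fin d) (Fin d) 𝕂) * F : Matrix (Fin d) (Fin n) 𝕂))ᴴ * X).trace)
        + ∑ b, ((∑ j, ‖F j b‖ ^ 2) / r b - 1) / r b
            * (∑ a, re ((starRingEnd 𝕂) (F a b) * X a b)) := by
    rw [frobInner]
    rw [Finset.sum_congr rfl fun a _ => Finset.sum_congr rfl fun b _ => hentry a b]
    rw [Finset.sum_congr rfl fun a (_ : a ∈ Finset.univ) => Finset.sum_add_distrib,
      Finset.sum_add_distrib]
    congr 1
    · rw [← frobInner_trace, frobInner, Finset.mul_sum]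
      exact Finset.sum_congr rfl fun a _ => by rw [Finset.mul_sum]
    · rw [Finset.sum_comm]
      exact Finset.sum_congr rfl fun b _ => by rw [Finset.mul_sum]
  rw [hR]
  congr 1
  rw [Finset.mul_sum]
  refine Finset.sum_congr rfl fun b _ => ?_
  rw [show (∑ a, 2 * re ((starRingEnd 𝕂) (F a b) * X a b))
      = 2 * ∑ a, re ((starRingEnd 𝕂) (F a b) * X a b) by rw [Finset.mul_sum]]
  ring

lemma gradMat_entry_iff (r : Fin n → ℝ) (F : Matrix (Fin d) (Fin n) 𝕂)
    (i : Fin n) (k : Fin d) :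
    gradMat r F k i = 0 ↔
      (4 : 𝕂) * ((F * Fᴴ).mulVec (fun k => F k i) k) =
        algebraMap ℝ 𝕂 (4 + 1 / r i - (∑ j, ‖F j i‖ ^ 2) / r i ^ 2) * F k i := by
  have hmv : (F * Fᴴ).mulVec (fun k => F k i) k
      = ((F * Fᴴ) * F : Matrix (Fin d) (Fin n) 𝕂) k i := by
    simp [Matrix.mulVec, dotProduct, Matrix.mul_apply]
  have hsub : ((F * Fᴴ - 1) * F : Matrix (Fin d) (Fin n) 𝕂) k i
      = ((F * Fᴴ) * F : Matrix (Fin d) (Fin n) 𝕂) k i - F k i := by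
    rw [Matrix.sub_mul, Matrix.one_mul, Matrix.sub_apply]
  rw [hmv]
  simp only [gradMat, Matrix.of_apply, hsub]
  have halg : (algebraMap ℝ 𝕂) (4 + 1 / r i - (∑ j, ‖F j i‖ ^ 2) / r i ^ 2)
      = ((4 + 1 / r i - (∑ j, ‖F j i‖ ^ 2) / r i ^ 2 : ℝ) : 𝕂) := rfl
  rw [halg]
  set T := ((F * Fᴴ) * F : Matrix (Fin d) (Fin n) 𝕂) k i
  set f := F k i
  set s := (∑ j, ‖F j i‖ ^ 2 : ℝ)
  push_cast
  constructor <;> intro h <;> linear_combination h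

end Aux

/-- `F` is a critical point of the total frame energy (`∇Φ_r(F) = 0`) iff
every column satisfies `4 F Fᴴ fᵢ = (4 + 1/rᵢ − ‖fᵢ‖²/rᵢ²) fᵢ`. -/


theorem stmt_11 (d n : ℕ) (hd : 1 ≤ d) (hdn : d ≤ n) (𝕂 : Type*) [RCLike 𝕂]
    (r : Fin n → ℝ) (hr : ∀ i, 0 < r i) (F : Matrix (Fin d) (Fin n) 𝕂) :
    IsFrobGradientAt (totalFrameEnergy r) (0 : Matrix (Fin d) (Fin n) 𝕂) F ↔
      ∀ i, (4 : 𝕂) • (F * Fᴴ).mulVec (fun k => F k i) =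
        algebraMap ℝ 𝕂 (4 + 1 / r i - (∑ j, ‖F j i‖ ^ 2) / r i ^ 2) • fun k => F k i := by
  obtain ⟨hdiff, hfd⟩ := tfe_fderiv r F
  constructor
  · rintro ⟨-, h⟩ i
    have hzero : frobInner (gradMat r F) (gradMat r F) = 0 := by
      rw [← hfd, h]
      simp [frobInner]
    have hG : ∀ a b, gradMat r F a b = 0 := by
      have hterm : ∀ (a : Fin d) (b : Fin n),
          RCLike.re ((starRingEnd 𝕂) (gradMat r F a b) * gradMat r F a b)
            = ‖gradMat r F a b‖ ^ 2 := by
        intro a b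
        rw [RCLike.conj_mul]
        norm_cast
      rw [frobInner] at hzero
      intro a b
      have h1 : ∀ a ∈ Finset.univ, (0:ℝ) ≤
          ∑ b, RCLike.re ((starRingEnd 𝕂) (gradMat r F a b) * gradMat r F a b) := by
        intro a _
        refine Finset.sum_nonneg fun b _ => ?_
        rw [hterm]
        positivity
      have h2 := (Finset.sum_eq_zero_iff_of_nonneg h1).mp hzero a (Finset.mem_univ a)
      have h3 : ∀ b ∈ Finset.univ, (0:ℝ) ≤
          RCLike.re ((starRingEnd 𝕂) (gradMat r F a b) * gradMat r F a b) := by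
        intro b _; rw [hterm]; positivity
      have h4 := (Finset.sum_eq_zero_iff_of_nonneg h3).mp h2 b (Finset.mem_univ b)
      rw [hterm] at h4
      simpa using pow_eq_zero_iff (n := 2) (by norm_num) |>.mp
        (by rw [← h4]) |> norm_eq_zero.mp
    funext k
    have := (gradMat_entry_iff r F i k).mp (hG k i)
    simpa [Pi.smul_apply, smul_eq_mul] using this
  · intro h
    have hG : gradMat r F = 0 := by
      ext a b
      rw [Matrix.zero_apply]
      refine (gradMat_entry_iff r F b a).mpr ?_
      have := congrFun (h b) a
      simpa [Pi.smul_apply, smul_eq_mul] using this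
    refine ⟨hdiff, fun X => ?_⟩
    rw [hfd X, hG]
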